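/- Let σ² > 0, let H be a complex N_R×N_T matrix, and let Q and Q₀ be N_T×N_T Hermitian positive semidefinite complex matrices. Then log det(σ² I + H Q H^H) ≤ log det(σ² I + H Q₀ H^H) + tr(H^H (σ² I + H Q₀ H^H)^{-1} H (Q − Q₀)), where both determinants are of Hermitian positive definite matrices (hence real and positive) and the trace term is real because H^H (σ² I + H Q₀ H^H)^{-1} H and Q − Q₀ are Hermitian. -/

import Mathlib

open Matrix ComplexOrder

lemma trace_eq_sum_eigs {n : Type*} [Fintype n] [DecidableEq n] {A : Matrix n n ℂ}
    (hA : A.IsHermitian) : A.trace = ∑ i, (hA.eigenvalues i : ℂ) := by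
  conv_lhs => rw [hA.spectral_theorem, Unitary.conjStarAlgAut_apply]
  rw [trace_mul_cycle]
  rw [Unitary.coe_star_mul_self]
  rw [one_mul, trace_diagonal]
  simp

lemma posDef_conj {n : Type*} [Fintype n] [DecidableEq n] {A : Matrix n n ℂ} (hA : A.PosDef)
    {B : Matrix n n ℂ} (hB : IsUnit B.det) : (B * A * Bᴴ).PosDef := by
  have hBu : IsUnit Bᴴ := (isUnit_iff_isUnit_det Bᴴ).mpr (by simpa using hB.star)
  exact hA.mul_mul_conjTranspose_same
    (Matrix.vecMul_injective_iff_isUnit.mpr ((isUnit_iff_isUnit_det B).mpr hB))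

lemma det_re_of_posDef {n : Type*} [Fintype n] [DecidableEq n] {A : Matrix n n ℂ}
    (hA : A.PosDef) : A.det = (A.det.re : ℂ) := by
  have h := hA.det_pos
  rw [Complex.lt_def] at h
  exact Complex.ext (by simp) (by simp [← h.2])

open scoped MatrixOrder in
lemma logdet_key {N : Type*} [Fintype N] [DecidableEq N] {A B : Matrix N N ℂ}
    (hA : A.PosDef) (hB : B.PosDef) :
    Real.log A.det.re ≤ Real.log B.det.re + ((B⁻¹ * (A - B)).trace).re := by
  set C := CFC.sqrt B with hCdef
  have hC2 : C * C = B := CFC.sqrt_mul_sqrt_self B (nonneg_iff_posSemidef.mpr hB.posSemidef)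
  have hCH : Cᴴ = C := (nonneg_iff_posSemidef.mp (CFC.sqrt_nonneg B)).isHermitian
  have hBdet : IsUnit B.det := hB.det_pos.ne'.isUnit
  have hCdet : IsUnit C.det := by
    rw [isUnit_iff_ne_zero]
    intro h
    apply hB.det_pos.ne'
    rw [← hC2, det_mul, h, mul_zero]
  have hCinvdet : IsUnit C⁻¹.det := by
    rw [isUnit_iff_ne_zero, det_nonsing_inv, Ring.inverse_eq_inv]
    exact inv_ne_zero hCdet.ne_zero
  have hCinvH : (C⁻¹)ᴴ = C⁻¹ := by rw [conjTranspose_nonsing_inv, hCH]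
  set M := C⁻¹ * A * C⁻¹ with hMdef
  have hM : M.PosDef := by
    have := posDef_conj hA hCinvdet
    rwa [hCinvH] at this
  -- determinant of M
  have hdetM : M.det = A.det / B.det := by
    rw [hMdef, det_mul, det_mul, det_nonsing_inv, ← hC2, det_mul,
      Ring.inverse_eq_inv]
    field_simp [hCdet.ne_zero]
  -- trace of M
  have htrM : M.trace = (B⁻¹ * A).trace := by
    rw [hMdef, trace_mul_cycle, ← Matrix.mul_inv_rev, hC2]
  -- eigenvalues
  set μ := hM.isHermitian.eigenvalues with hμdef
  have hμpos : ∀ i, 0 < μ i := hM.eigenvalues_pos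
  have hdet_re : M.det.re = ∏ i, μ i := by
    rw [hM.isHermitian.det_eq_prod_eigenvalues]; norm_cast
  have htr_re : M.trace.re = ∑ i, μ i := by
    rw [trace_eq_sum_eigs hM.isHermitian]; norm_cast
  have hlog : Real.log M.det.re ≤ M.trace.re - Fintype.card N := by
    rw [hdet_re, htr_re, Real.log_prod (fun i _ => (hμpos i).ne')]
    calc ∑ i, Real.log (μ i) ≤ ∑ i, (μ i - 1) :=
          Finset.sum_le_sum fun i _ => Real.log_le_sub_one_of_pos (hμpos i)
      _ = ∑ i, μ i - Fintype.card N := by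
          rw [Finset.sum_sub_distrib]; simp [Finset.card_univ]
  -- assemble
  have hAdet := det_re_of_posDef hA
  have hBdetre := det_re_of_posDef hB
  have hApos : 0 < A.det.re := by
    have := hA.det_pos; rw [Complex.lt_def] at this; exact this.1
  have hBpos : 0 < B.det.re := by
    have := hB.det_pos; rw [Complex.lt_def] at this; exact this.1
  have hMdet_re : M.det.re = A.det.re / B.det.re := by
    have h2 : M.det = ((A.det.re / B.det.re : ℝ) : ℂ) := by
      rw [hdetM]; rw [hAdet, hBdetre]; norm_cast
    rw [h2, Complex.ofReal_re]
  have htr_final : ((B⁻¹ * (A - B)).trace).re = (B⁻¹ * A).trace.re - Fintype.card N := by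
    rw [mul_sub, trace_sub, nonsing_inv_mul B hBdet, trace_one]
    simp
  have := hlog
  rw [hMdet_re, Real.log_div hApos.ne' hBpos.ne', htrM] at this
  rw [htr_final]
  linarith
theorem logdet_tangent_majorization {NR NT : ℕ} (σsq : ℝ) (hσ : 0 < σsq)
    (H : Matrix (Fin NR) (Fin NT) ℂ)
    (Q Q0 : Matrix (Fin NT) (Fin NT) ℂ)
    (hQ : Q.PosSemidef) (hQ0 : Q0.PosSemidef) :
    Real.log (((σsq : ℂ) • (1 : Matrix (Fin NR) (Fin NR) ℂ) + H * Q * Hᴴ).det.re)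
      ≤ Real.log (((σsq : ℂ) • (1 : Matrix (Fin NR) (Fin NR) ℂ) + H * Q0 * Hᴴ).det.re)
        + ((Hᴴ * ((σsq : ℂ) • (1 : Matrix (Fin NR) (Fin NR) ℂ) + H * Q0 * Hᴴ)⁻¹ * H *
            (Q - Q0)).trace).re := by
  set A := (σsq : ℂ) • (1 : Matrix (Fin NR) (Fin NR) ℂ) + H * Q * Hᴴ with hAdef
  set B := (σsq : ℂ) • (1 : Matrix (Fin NR) (Fin NR) ℂ) + H * Q0 * Hᴴ with hBdef
  have hσc : (0 : ℂ) < (σsq : ℂ) := by exact_mod_cast hσ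
  have h1 : ((σsq : ℂ) • (1 : Matrix (Fin NR) (Fin NR) ℂ)).PosDef := by
    rw [smul_one_eq_diagonal]
    exact posDef_diagonal_iff.mpr fun _ => hσc
  have hA : A.PosDef := h1.add_posSemidef (hQ.mul_mul_conjTranspose_same H)
  have hB : B.PosDef := h1.add_posSemidef (hQ0.mul_mul_conjTranspose_same H)
  have htr : (Hᴴ * B⁻¹ * H * (Q - Q0)).trace = (B⁻¹ * (A - B)).trace := by
    have hAB : A - B = H * (Q - Q0) * Hᴴ := by
      rw [hAdef, hBdef]; simp only [Matrix.mul_sub, Matrix.sub_mul]; abel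
    rw [hAB, show Hᴴ * B⁻¹ * H * (Q - Q0) = Hᴴ * (B⁻¹ * (H * (Q - Q0))) by simp only [Matrix.mul_assoc],
      trace_mul_comm, show B⁻¹ * (H * (Q - Q0)) * Hᴴ = B⁻¹ * (H * (Q - Q0) * Hᴴ) by
        simp only [Matrix.mul_assoc]]
  rw [htr]
  exact logdet_key hA hB
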